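/- (Theorem 1(i)) The three 0-1 sets X^1, X^2, X^3 coincide, where X^1 is defined by the assignment constraints together with inequalities (source: x(v,1)=0 for v ∈ V(S); destination: x(v,ℓ)=0 for v ∈ V(D); adjacent pairs: x(v0,s)+x(v,s+1) ≤ 1 for v ∈ V(v0)), X^2 by the assignment constraints together with (x(v,s)=0 for v ∈ V(S) ∪ V(D), all s; all non-adjacent pairs: x(v0,s)+x(v,s0) ≤ 1 for v ∈ V(v0) and s < s0), and X^3 by the assignment constraints together with (x(v,s)=0 for v ∈ V(S) ∪ V(D), all s; aggregated: Σ_{v∈V\V(v0)} x(v,s) ≤ Σ_{v∈V\V(v0)} x(v,s+1) for all v0 ∈ V, s < ℓ). -/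
import Mathlib

lemma aux_one {I : Type*} [DecidableEq I] (V : Finset I) (x : I → ℤ)
    (hb : ∀ v ∈ V, x v = 0 ∨ x v = 1) (hs : ∑ v ∈ V, x v = 1) :
    ∃ u ∈ V, x u = 1 ∧ ∀ w ∈ V, w ≠ u → x w = 0 := by
  have h1 : ∃ u ∈ V, x u = 1 := by
    by_contra h
    push_neg at h
    have : ∑ v ∈ V, x v = 0 :=
      Finset.sum_eq_zero (fun v hv => (hb v hv).resolve_right (h v hv))
    omega
  obtain ⟨u, hu, hxu⟩ := h1
  refine ⟨u, hu, hxu, fun w hw hne => ?_⟩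
  rcases hb w hw with h0 | h1
  · exact h0
  · exfalso
    have hsub : ({u, w} : Finset I) ⊆ V := by
      intro z hz
      simp only [Finset.mem_insert, Finset.mem_singleton] at hz
      rcases hz with rfl | rfl <;> assumption
    have hsum : ∑ v ∈ ({u, w} : Finset I), x v ≤ ∑ v ∈ V, x v :=
      Finset.sum_le_sum_of_subset_of_nonneg hsub
        (fun i hi _ => by rcases hb i hi with h | h <;> omega)
    rw [Finset.sum_pair (Ne.symm hne)] at hsum
    omega

lemma aux_ind {I : Type*} [DecidableEq I] (V A : Finset I) (hA : A ⊆ V) (x : I → ℤ)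
    (u : I) (hxu : x u = 1) (h0 : ∀ w ∈ V, w ≠ u → x w = 0) :
    ∑ v ∈ A, x v = if u ∈ A then 1 else 0 := by
  rw [show ∑ v ∈ A, x v = ∑ v ∈ A, (if v = u then (1 : ℤ) else 0) from
      Finset.sum_congr rfl (fun v hv => by
        by_cases h : v = u
        · simp [h, hxu]
        · simp [h, h0 v (hA hv) h]),
    Finset.sum_ite_eq' A u (fun _ => (1 : ℤ))]

lemma aux_chain {I : Type*} [DecidableEq I] (L : I → I → Prop) (V : Finset I) (ℓ : ℕ)
    (x : I → ℕ → ℤ)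
    (hb : ∀ v ∈ V, ∀ s, x v s = 0 ∨ x v s = 1)
    (hsum : ∀ s, 1 ≤ s → s ≤ ℓ → ∑ v ∈ V, x v s = 1)
    (hadj : ∀ v0 ∈ V, ∀ v ∈ V, v ≠ v0 → ¬ Relation.ReflTransGen L v0 v →
      ∀ s, 1 ≤ s → s < ℓ → x v0 s + x v (s + 1) ≤ 1) :
    ∀ s t, 1 ≤ s → s ≤ t → t ≤ ℓ → ∀ u ∈ V, x u s = 1 → ∀ w ∈ V, x w t = 1 →
      Relation.ReflTransGen L u w := by
  intro s t hs1 hst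
  induction t, hst using Nat.le_induction with
  | base =>
    intro htl u hu hxu w hw hxw
    obtain ⟨z, hz, hxz, h0⟩ := aux_one V (fun v => x v s) (fun v hv => hb v hv s)
      (hsum s hs1 htl)
    have hu' : u = z := by by_contra h; have := h0 u hu h; simp_all
    have hw' : w = z := by by_contra h; have := h0 w hw h; simp_all
    rw [hu', hw']
  | succ t ht ih =>
    intro htl u hu hxu w hw hxw
    have ht1 : 1 ≤ t := le_trans hs1 ht
    obtain ⟨z, hz, hxz, h0⟩ := aux_one V (fun v => x v t) (fun v hv => hb v hv t)
      (hsum t ht1 (by omega))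
    have h1 : Relation.ReflTransGen L u z := ih (by omega) u hu hxu z hz hxz
    by_cases hwz : w = z
    · rw [hwz]; exact h1
    · have h2 : Relation.ReflTransGen L z w := by
        by_contra hnr
        have := hadj z hz w hw hwz hnr t ht1 (by omega)
        omega
      exact h1.trans h2



/-- Theorem 1(i): the three 0-1 sets `X¹`, `X²`, `X³` coincide, where `X¹` uses the simple
connectivity inequalities, `X²` the extended ones, and `X³` the zero constraints together
with the aggregated inequalities. -/
theorem three_formulations_coincide {I : Type*} [DecidableEq I] (L : I → I → Prop)
    [DecidableRel (Relation.ReflTransGen L)] (S D : I) (V : Finset I) (ℓ : ℕ)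
    (hℓ : 1 ≤ ℓ) :
    ({x : I → ℕ → ℤ |
        (∀ v ∈ V, ∀ s, x v s = 0 ∨ x v s = 1) ∧
        (∀ s, 1 ≤ s → s ≤ ℓ → ∑ v ∈ V, x v s = 1) ∧
        (∀ v ∈ V, ¬ Relation.ReflTransGen L S v → x v 1 = 0) ∧
        (∀ v ∈ V, ¬ Relation.ReflTransGen L v D → x v ℓ = 0) ∧
        (∀ v0 ∈ V, ∀ v ∈ V, v ≠ v0 → ¬ Relation.ReflTransGen L v0 v →
          ∀ s, 1 ≤ s → s < ℓ → x v0 s + x v (s + 1) ≤ 1)} =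
      {x : I → ℕ → ℤ |
        (∀ v ∈ V, ∀ s, x v s = 0 ∨ x v s = 1) ∧
        (∀ s, 1 ≤ s → s ≤ ℓ → ∑ v ∈ V, x v s = 1) ∧
        (∀ v ∈ V, (¬ Relation.ReflTransGen L S v ∨ ¬ Relation.ReflTransGen L v D) →
          ∀ s, 1 ≤ s → s ≤ ℓ → x v s = 0) ∧
        (∀ v0 ∈ V, ∀ v ∈ V, v ≠ v0 → ¬ Relation.ReflTransGen L v0 v →
          ∀ s s0, 1 ≤ s → s < s0 → s0 ≤ ℓ → x v0 s + x v s0 ≤ 1)}) ∧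
    ({x : I → ℕ → ℤ |
        (∀ v ∈ V, ∀ s, x v s = 0 ∨ x v s = 1) ∧
        (∀ s, 1 ≤ s → s ≤ ℓ → ∑ v ∈ V, x v s = 1) ∧
        (∀ v ∈ V, (¬ Relation.ReflTransGen L S v ∨ ¬ Relation.ReflTransGen L v D) →
          ∀ s, 1 ≤ s → s ≤ ℓ → x v s = 0) ∧
        (∀ v0 ∈ V, ∀ v ∈ V, v ≠ v0 → ¬ Relation.ReflTransGen L v0 v →
          ∀ s s0, 1 ≤ s → s < s0 → s0 ≤ ℓ → x v0 s + x v s0 ≤ 1)} =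
      {x : I → ℕ → ℤ |
        (∀ v ∈ V, ∀ s, x v s = 0 ∨ x v s = 1) ∧
        (∀ s, 1 ≤ s → s ≤ ℓ → ∑ v ∈ V, x v s = 1) ∧
        (∀ v ∈ V, (¬ Relation.ReflTransGen L S v ∨ ¬ Relation.ReflTransGen L v D) →
          ∀ s, 1 ≤ s → s ≤ ℓ → x v s = 0) ∧
        (∀ v0 ∈ V, ∀ s, 1 ≤ s → s < ℓ →
          ∑ v ∈ V.filter (fun v => v = v0 ∨ Relation.ReflTransGen L v0 v), x v s
            ≤ ∑ v ∈ V.filter (fun v => v = v0 ∨ Relation.ReflTransGen L v0 v), x v (s + 1))}) := by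
  constructor
  · ext x
    simp only [Set.mem_setOf_eq]
    constructor
    · rintro ⟨hb, hsum, hsrc, hdst, hadj⟩
      have key := aux_chain L V ℓ x hb hsum hadj
      refine ⟨hb, hsum, ?_, ?_⟩
      · intro v hv hor s h1 hsl
        rcases hb v hv s with h0 | h1'
        · exact h0
        exfalso
        rcases hor with hS | hD
        · obtain ⟨u, hu, hxu, _⟩ := aux_one V (fun w => x w 1) (fun w hw => hb w hw 1)
            (hsum 1 le_rfl hℓ)
          have hSu : Relation.ReflTransGen L S u := by
            by_contra h
            have := hsrc u hu h
            omega
          exact hS (hSu.trans (key 1 s le_rfl h1 hsl u hu hxu v hv h1'))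
        · obtain ⟨u, hu, hxu, _⟩ := aux_one V (fun w => x w ℓ) (fun w hw => hb w hw ℓ)
            (hsum ℓ hℓ le_rfl)
          have huD : Relation.ReflTransGen L u D := by
            by_contra h
            have := hdst u hu h
            omega
          exact hD ((key s ℓ h1 hsl le_rfl v hv h1' u hu hxu).trans huD)
      · intro v0 hv0 v hv hne hnr s s0 h1 hss0 hs0l
        rcases hb v0 hv0 s with h | h <;> rcases hb v hv s0 with h' | h'
        · omega
        · omega
        · omega
        · exact absurd (key s s0 h1 (le_of_lt hss0) hs0l v0 hv0 h v hv h') hnr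
    · rintro ⟨hb, hsum, hzero, hpair⟩
      exact ⟨hb, hsum,
        fun v hv h => hzero v hv (Or.inl h) 1 le_rfl hℓ,
        fun v hv h => hzero v hv (Or.inr h) ℓ hℓ le_rfl,
        fun v0 hv0 v hv hne hnr s h1 hsl =>
          hpair v0 hv0 v hv hne hnr s (s + 1) h1 (by omega) (by omega)⟩
  · ext x
    simp only [Set.mem_setOf_eq]
    constructor
    · rintro ⟨hb, hsum, hzero, hpair⟩
      refine ⟨hb, hsum, hzero, ?_⟩
      intro v0 hv0 s h1 hsl
      set A := V.filter (fun v => v = v0 ∨ Relation.ReflTransGen L v0 v) with hAdef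
      have hAV : A ⊆ V := Finset.filter_subset _ _
      obtain ⟨u, hu, hxu, h0u⟩ := aux_one V (fun w => x w s) (fun w hw => hb w hw s)
        (hsum s h1 (le_of_lt hsl))
      obtain ⟨w, hw, hxw, h0w⟩ := aux_one V (fun w => x w (s + 1)) (fun w hw => hb w hw (s + 1))
        (hsum (s + 1) (by omega) (by omega))
      rw [aux_ind V A hAV (fun v => x v s) u hxu h0u,
        aux_ind V A hAV (fun v => x v (s + 1)) w hxw h0w]
      by_cases hua : u ∈ A
      · have hwa : w ∈ A := by
          simp only [hAdef, Finset.mem_filter] at hua ⊢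
          refine ⟨hw, ?_⟩
          by_cases hwu : w = u
          · rw [hwu]; exact hua.2
          · have hr : Relation.ReflTransGen L u w := by
              by_contra h
              have := hpair u hu w hw hwu h s (s + 1) h1 (by omega) (by omega)
              omega
            right
            rcases hua.2 with rfl | h
            · exact hr
            · exact h.trans hr
        simp [hua, hwa]
      · simp only [hua, if_false]
        split_ifs <;> omega
    · rintro ⟨hb, hsum, hzero, hagg⟩
      refine ⟨hb, hsum, hzero, ?_⟩
      intro v0 hv0 v hv hne hnr s s0 h1 hss0 hs0l
      rcases hb v0 hv0 s with h | h <;> rcases hb v hv s0 with h' | h'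
      · omega
      · omega
      · omega
      exfalso
      set A := V.filter (fun v => v = v0 ∨ Relation.ReflTransGen L v0 v) with hAdef
      have hAV : A ⊆ V := Finset.filter_subset _ _
      have key : ∀ t, s ≤ t → t ≤ s0 → ∀ w ∈ V, x w t = 1 →
          (w = v0 ∨ Relation.ReflTransGen L v0 w) := by
        intro t hst
        induction t, hst using Nat.le_induction with
        | base =>
          intro _ w hw hxw
          obtain ⟨z, hz, hxz, h0⟩ := aux_one V (fun y => x y s) (fun y hy => hb y hy s)
            (hsum s h1 (by omega))
          have hv0z : v0 = z := by by_contra hc; have := h0 v0 hv0 hc; simp_all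
          have hwz : w = z := by by_contra hc; have := h0 w hw hc; simp_all
          left; rw [hwz, hv0z]
        | succ t ht ih =>
          intro htle w hw hxw
          obtain ⟨z, hz, hxz, h0z⟩ := aux_one V (fun y => x y t) (fun y hy => hb y hy t)
            (hsum t (by omega) (by omega))
          obtain ⟨z', hz', hxz', h0z'⟩ := aux_one V (fun y => x y (t + 1))
            (fun y hy => hb y hy (t + 1)) (hsum (t + 1) (by omega) (by omega))
          have hwz' : w = z' := by by_contra hc; have := h0z' w hw hc; simp_all
          have hzA : z ∈ A := Finset.mem_filter.mpr ⟨hz, ih (by omega) z hz hxz⟩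
          have hagg' := hagg v0 hv0 t (by omega) (by omega)
          rw [← hAdef, aux_ind V A hAV (fun y => x y t) z hxz h0z,
            aux_ind V A hAV (fun y => x y (t + 1)) z' hxz' h0z'] at hagg'
          have hz'A : z' ∈ A := by
            by_contra hc
            simp [hzA, hc] at hagg'
          rw [hwz']
          exact (Finset.mem_filter.mp hz'A).2
      rcases key s0 (le_of_lt hss0) le_rfl v hv h' with rfl | hr
      · exact hne rfl
      · exact hnr hr
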